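/- The exponential growth rate of the number of recurrent configurations is (3+√5)/2: the sequence N_L^{1/L} converges to (3+√5)/2 as L → ∞. -/

import Mathlib

def Recurrent {L : ℕ} (z : Fin L → Fin 3) : Prop :=
  ∀ x, z x = 0 → ∃ x', x < x' ∧ z x' = 2 ∧ ∀ y, x < y → y < x' → z y = 1

noncomputable def NRec (L : ℕ) : ℕ := Nat.card {z : Fin L → Fin 3 // Recurrent z}

def Pending {L : ℕ} (z : Fin L → Fin 3) : Prop :=
  ∃ x', z x' = 2 ∧ ∀ y, y < x' → z y = 1

lemma pending_cons {L : ℕ} (c : Fin 3) (z : Fin L → Fin 3) :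
    Pending (Fin.cons c z) ↔ c = 2 ∨ (c = 1 ∧ Pending z) := by
  constructor
  · rintro ⟨x', h2, h1⟩
    induction x' using Fin.cases with
    | zero => exact Or.inl (by simpa using h2)
    | succ j =>
      refine Or.inr ⟨by simpa using h1 0 (Fin.succ_pos j), ⟨j, by simpa using h2, ?_⟩⟩
      intro y hy
      simpa using h1 y.succ (Fin.succ_lt_succ_iff.mpr hy)
  · rintro (rfl | ⟨rfl, j, h2, h1⟩)
    · exact ⟨0, by simp, fun y hy => absurd hy (Fin.not_lt_zero y)⟩
    · refine ⟨j.succ, by simpa using h2, ?_⟩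
      intro y hy
      induction y using Fin.cases with
      | zero => simp
      | succ i => simpa using h1 i (Fin.succ_lt_succ_iff.mp hy)

lemma recurrent_cons {L : ℕ} (c : Fin 3) (z : Fin L → Fin 3) :
    Recurrent (Fin.cons c z) ↔ Recurrent z ∧ (c = 0 → Pending z) := by
  constructor
  · intro h
    constructor
    · intro x hx
      obtain ⟨x', hlt, h2, h1⟩ := h x.succ (by simpa using hx)
      obtain ⟨j, rfl⟩ := Fin.exists_succ_eq_of_ne_zero ((Fin.succ_pos x).trans hlt).ne'
      refine ⟨j, Fin.succ_lt_succ_iff.mp hlt, by simpa using h2, ?_⟩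
      intro y hy1 hy2
      simpa using h1 y.succ (Fin.succ_lt_succ_iff.mpr hy1) (Fin.succ_lt_succ_iff.mpr hy2)
    · rintro rfl
      obtain ⟨x', hlt, h2, h1⟩ := h 0 (by simp)
      obtain ⟨j, rfl⟩ := Fin.exists_succ_eq_of_ne_zero hlt.ne'
      refine ⟨j, by simpa using h2, ?_⟩
      intro y hy
      simpa using h1 y.succ (Fin.succ_pos y) (Fin.succ_lt_succ_iff.mpr hy)
  · rintro ⟨hr, hp⟩ x hx
    induction x using Fin.cases with
    | zero =>
      obtain ⟨j, h2, h1⟩ := hp (by simpa using hx)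
      refine ⟨j.succ, Fin.succ_pos j, by simpa using h2, ?_⟩
      intro y hy1 hy2
      induction y using Fin.cases with
      | zero => exact absurd hy1 (lt_irrefl 0)
      | succ i => simpa using h1 i (Fin.succ_lt_succ_iff.mp hy2)
    | succ i =>
      obtain ⟨j, hlt, h2, h1⟩ := hr i (by simpa using hx)
      refine ⟨j.succ, Fin.succ_lt_succ_iff.mpr hlt, by simpa using h2, ?_⟩
      intro y hy1 hy2
      induction y using Fin.cases with
      | zero => exact absurd hy1 (Fin.not_lt_zero _)
      | succ k =>
        simpa using h1 k (Fin.succ_lt_succ_iff.mp hy1) (Fin.succ_lt_succ_iff.mp hy2)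

def consEquivSigma {L : ℕ} (P : (Fin (L + 1) → Fin 3) → Prop) :
    {z : Fin (L + 1) → Fin 3 // P z} ≃ Σ c : Fin 3, {z : Fin L → Fin 3 // P (Fin.cons c z)} where
  toFun z := ⟨z.1 0, Fin.tail z.1, by rw [Fin.cons_self_tail]; exact z.2⟩
  invFun p := ⟨Fin.cons p.1 p.2.1, p.2.2⟩
  left_inv z := by simp [Fin.cons_self_tail]
  right_inv p := by rcases p with ⟨c, z, h⟩; exact Sigma.subtype_ext (by simp) (by simp [Fin.tail_cons])

lemma card_sigma_fin3 (S : Fin 3 → Type*) [∀ c, Finite (S c)] :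
    Nat.card (Σ c, S c) = Nat.card (S 0) + Nat.card (S 1) + Nat.card (S 2) := by
  haveI : ∀ c, Fintype (S c) := fun c => Fintype.ofFinite _
  rw [Nat.card_eq_fintype_card, Fintype.card_sigma, Fin.sum_univ_three]
  simp [Nat.card_eq_fintype_card]

noncomputable def NPen (L : ℕ) : ℕ := Nat.card {z : Fin L → Fin 3 // Recurrent z ∧ Pending z}

lemma NRec_zero : NRec 0 = 1 := by
  haveI : Unique {z : Fin 0 → Fin 3 // Recurrent z} :=
    ⟨⟨⟨finZeroElim, fun x => x.elim0⟩⟩, fun z => Subtype.ext (funext fun x => x.elim0)⟩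
  exact Nat.card_unique

lemma NPen_zero : NPen 0 = 0 := by
  haveI : IsEmpty {z : Fin 0 → Fin 3 // Recurrent z ∧ Pending z} :=
    ⟨fun z => by obtain ⟨x', _, _⟩ := z.2.2; exact x'.elim0⟩
  exact Nat.card_of_isEmpty

lemma NRec_succ (L : ℕ) : NRec (L + 1) = NPen L + NRec L + NRec L := by
  rw [NRec, Nat.card_congr (consEquivSigma Recurrent), card_sigma_fin3]
  have h0 : Nat.card {z : Fin L → Fin 3 // Recurrent (Fin.cons 0 z)} = NPen L :=
    Nat.card_congr (Equiv.subtypeEquivRight fun z => by rw [recurrent_cons]; simp)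
  have h1 : Nat.card {z : Fin L → Fin 3 // Recurrent (Fin.cons 1 z)} = NRec L :=
    Nat.card_congr (Equiv.subtypeEquivRight fun z => by rw [recurrent_cons]; simp)
  have h2 : Nat.card {z : Fin L → Fin 3 // Recurrent (Fin.cons 2 z)} = NRec L :=
    Nat.card_congr (Equiv.subtypeEquivRight fun z => by rw [recurrent_cons]; simp)
  omega

lemma NPen_succ (L : ℕ) : NPen (L + 1) = NPen L + NRec L := by
  rw [NPen, Nat.card_congr (consEquivSigma (fun z => Recurrent z ∧ Pending z)),
    card_sigma_fin3]
  have h0 : Nat.card {z : Fin L → Fin 3 //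
      Recurrent (Fin.cons 0 z) ∧ Pending (Fin.cons 0 z)} = 0 := by
    haveI : IsEmpty {z : Fin L → Fin 3 //
        Recurrent (Fin.cons 0 z) ∧ Pending (Fin.cons 0 z)} :=
      ⟨fun z => by have := (pending_cons 0 z.1).mp z.2.2; simp at this⟩
    exact Nat.card_of_isEmpty
  rw [h0]
  have h1 : Nat.card {z : Fin L → Fin 3 //
      Recurrent (Fin.cons 1 z) ∧ Pending (Fin.cons 1 z)} = NPen L :=
    Nat.card_congr (Equiv.subtypeEquivRight fun z => by
      rw [recurrent_cons, pending_cons]; simp)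
  have h2 : Nat.card {z : Fin L → Fin 3 //
      Recurrent (Fin.cons 2 z) ∧ Pending (Fin.cons 2 z)} = NRec L :=
    Nat.card_congr (Equiv.subtypeEquivRight fun z => by
      rw [recurrent_cons, pending_cons]; simp)
  omega

lemma NRec_eq_fib (L : ℕ) : NRec L = Nat.fib (2 * L + 1) ∧ NPen L = Nat.fib (2 * L) := by
  induction L with
  | zero => simp [NRec_zero, NPen_zero]
  | succ L ih =>
    obtain ⟨h1, h2⟩ := ih
    have f2 : Nat.fib (2 * L + 2) = Nat.fib (2 * L) + Nat.fib (2 * L + 1) :=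
      Nat.fib_add_two
    have f3 : Nat.fib (2 * L + 1 + 2) = Nat.fib (2 * L + 1) + Nat.fib (2 * L + 1 + 1) :=
      Nat.fib_add_two
    have e1 : 2 * (L + 1) + 1 = 2 * L + 1 + 2 := by ring
    have e2 : 2 * (L + 1) = 2 * L + 2 := by ring
    have e3 : 2 * L + 1 + 1 = 2 * L + 2 := by ring
    rw [e3] at f3
    constructor
    · rw [NRec_succ, h1, h2, e1, f3, f2]; omega
    · rw [NPen_succ, h1, h2, e2, f2]

open Real goldenRatio in
lemma fib_succ_le_gold_pow (n : ℕ) : (Nat.fib (n + 1) : ℝ) ≤ φ ^ n := by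
  induction n using Nat.twoStepInduction with
  | zero => simp
  | one => simpa using one_lt_goldenRatio.le
  | more n ih1 ih2 =>
    have h : (Nat.fib (n + 1 + 2) : ℝ) = Nat.fib (n + 1) + Nat.fib (n + 1 + 1) := by
      rw [Nat.fib_add_two]; push_cast; ring
    have hg : φ ^ (n + 2) = φ ^ (n + 1) + φ ^ n := by
      calc φ ^ (n + 2) = φ ^ n * φ ^ 2 := by ring
        _ = φ ^ n * (φ + 1) := by rw [goldenRatio_sq]
        _ = φ ^ (n + 1) + φ ^ n := by ring
    show (Nat.fib (n + 1 + 2) : ℝ) ≤ φ ^ (n + 2)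
    rw [h, hg]
    have := ih2
    linarith

open Real goldenRatio in
lemma gold_pow_le_fib (n : ℕ) : φ ^ n ≤ (Nat.fib (n + 2) : ℝ) := by
  induction n using Nat.twoStepInduction with
  | zero => simp
  | one =>
    have h3 : Nat.fib 3 = 2 := rfl
    show φ ^ 1 ≤ (Nat.fib 3 : ℝ)
    rw [h3, pow_one]
    exact_mod_cast goldenRatio_lt_two.le
  | more n ih1 ih2 =>
    have h : (Nat.fib (n + 2 + 2) : ℝ) = Nat.fib (n + 2) + Nat.fib (n + 2 + 1) := by
      rw [Nat.fib_add_two]; push_cast; ring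
    have hg : φ ^ (n + 2) = φ ^ (n + 1) + φ ^ n := by
      calc φ ^ (n + 2) = φ ^ n * φ ^ 2 := by ring
        _ = φ ^ n * (φ + 1) := by rw [goldenRatio_sq]
        _ = φ ^ (n + 1) + φ ^ n := by ring
    have ih2' : φ ^ (n + 1) ≤ (Nat.fib (n + 2 + 1) : ℝ) := by
      have e : n + 1 + 2 = n + 2 + 1 := by ring
      rw [← e]; exact ih2
    rw [h, hg]
    linarith

open Real goldenRatio in
theorem NRec_growth_rate :
    Filter.Tendsto (fun L : ℕ => (NRec L : ℝ) ^ (1 / (L : ℝ)))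
      Filter.atTop (nhds ((3 + Real.sqrt 5) / 2)) := by
  have h2 : φ ^ (2 : ℝ) = φ ^ (2 : ℕ) := by
    rw [← Real.rpow_natCast]; norm_num
  have hgold : ((3 : ℝ) + Real.sqrt 5) / 2 = φ ^ (2 : ℝ) := by
    rw [h2, goldenRatio_sq]
    show (3 + √5) / 2 = (1 + √5) / 2 + 1
    ring
  rw [hgold]
  have hlim : Filter.Tendsto (fun L : ℕ => φ ^ ((2 : ℝ) - 1 / (L : ℝ)))
      Filter.atTop (nhds (φ ^ (2 : ℝ))) := by
    have h1 : Filter.Tendsto (fun L : ℕ => (2 : ℝ) - 1 / (L : ℝ))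
        Filter.atTop (nhds 2) := by
      simpa using (tendsto_const_nhds (x := (2 : ℝ))).sub tendsto_one_div_atTop_nhds_zero_nat
    exact (Real.continuousAt_const_rpow goldenRatio_ne_zero).tendsto.comp h1
  refine tendsto_of_tendsto_of_tendsto_of_le_of_le' hlim tendsto_const_nhds ?_ ?_
  · filter_upwards [Filter.eventually_ge_atTop 1] with L hL
    have hL0 : (0 : ℝ) < L := by exact_mod_cast hL
    have hNR : (NRec L : ℝ) = Nat.fib (2 * L + 1) := by
      exact_mod_cast congrArg (Nat.cast : ℕ → ℝ) (NRec_eq_fib L).1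
    have hlow : φ ^ (2 * L - 1 : ℕ) ≤ (NRec L : ℝ) := by
      rw [hNR]
      have h := gold_pow_le_fib (2 * L - 1)
      have e : 2 * L - 1 + 2 = 2 * L + 1 := by omega
      rwa [e] at h
    have key : φ ^ ((2 : ℝ) - 1 / L) = (φ ^ (2 * L - 1 : ℕ) : ℝ) ^ (1 / (L : ℝ)) := by
      rw [← Real.rpow_natCast φ (2 * L - 1), ← Real.rpow_mul goldenRatio_pos.le]
      congr 1
      have e : ((2 * L - 1 : ℕ) : ℝ) = 2 * L - 1 := by
        rw [Nat.cast_sub (by omega : 1 ≤ 2 * L)]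
        push_cast; ring
      rw [e]
      field_simp
    rw [key]
    exact Real.rpow_le_rpow (pow_nonneg goldenRatio_pos.le _) hlow (by positivity)
  · filter_upwards [Filter.eventually_ge_atTop 1] with L hL
    have hL0 : (0 : ℝ) < L := by exact_mod_cast hL
    have hNR : (NRec L : ℝ) = Nat.fib (2 * L + 1) := by
      exact_mod_cast congrArg (Nat.cast : ℕ → ℝ) (NRec_eq_fib L).1
    have hup : (NRec L : ℝ) ≤ φ ^ (2 * L : ℕ) := by
      rw [hNR]; exact fib_succ_le_gold_pow (2 * L)
    have key : (φ ^ (2 * L : ℕ) : ℝ) ^ (1 / (L : ℝ)) = φ ^ (2 : ℝ) := by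
      rw [← Real.rpow_natCast φ (2 * L), ← Real.rpow_mul goldenRatio_pos.le]
      congr 1
      push_cast
      field_simp
    calc (NRec L : ℝ) ^ (1 / (L : ℝ))
        ≤ (φ ^ (2 * L : ℕ)) ^ (1 / (L : ℝ)) :=
          Real.rpow_le_rpow (Nat.cast_nonneg _) hup (by positivity)
      _ = φ ^ (2 : ℝ) := key
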